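/- Let ρ ≥ 2 + √6, let T ≥ 2 and n ≥ 1 be integers, and let K ⊆ {0,…,T−1} be a set with T−1 ∈ K and min K < T−1. For each k ∈ K let d_k ∈ ℝⁿ be a unit vector and set d_k := 0 for k ∉ K. Define x₀ := 0 and x_{t+1} := ρ x_t + d_t for t = 0,…,T−1. Then the matrix ρ Iₙ is NOT a global minimizer over A ∈ ℝ^{n×n} of the loss g(A) = Σ_{t=0}^{T−1} ‖x_{t+1} − A x_t‖₂; that is, there exists A ∈ ℝ^{n×n} with g(A) < g(ρ Iₙ). -/
import Mathlib


open Matrix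
open scoped BigOperators

/-- Euclidean norm of a vector in `ℝ^k`. -/
noncomputable def e2norm {k : ℕ} (v : Fin k → ℝ) : ℝ := Real.sqrt (∑ i, (v i) ^ 2)

lemma e2norm_eq {k : ℕ} (v : Fin k → ℝ) :
    e2norm v = ‖(WithLp.equiv 2 (Fin k → ℝ)).symm v‖ := by
  simp [e2norm, EuclideanSpace.norm_eq, sq_abs]

lemma e2norm_nonneg {k : ℕ} (v : Fin k → ℝ) : 0 ≤ e2norm v :=
  Real.sqrt_nonneg _

lemma e2norm_zero {k : ℕ} : e2norm (0 : Fin k → ℝ) = 0 := by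
  simp [e2norm]

lemma e2norm_add_le {k : ℕ} (v w : Fin k → ℝ) :
    e2norm (v + w) ≤ e2norm v + e2norm w := by
  rw [e2norm_eq, e2norm_eq, e2norm_eq]
  exact norm_add_le _ _

lemma e2norm_neg {k : ℕ} (v : Fin k → ℝ) : e2norm (-v) = e2norm v := by
  rw [e2norm_eq, e2norm_eq]
  exact norm_neg _

lemma e2norm_sub_le {k : ℕ} (v w : Fin k → ℝ) :
    e2norm (v - w) ≤ e2norm v + e2norm w := by
  rw [sub_eq_add_neg]
  calc e2norm (v + -w) ≤ e2norm v + e2norm (-w) := e2norm_add_le _ _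
    _ = e2norm v + e2norm w := by rw [e2norm_neg]

lemma e2norm_smul {k : ℕ} (c : ℝ) (v : Fin k → ℝ) :
    e2norm (c • v) = |c| * e2norm v := by
  rw [e2norm_eq, e2norm_eq]
  rw [show (WithLp.equiv 2 (Fin k → ℝ)).symm (c • v)
      = c • (WithLp.equiv 2 (Fin k → ℝ)).symm v from rfl]
  simp [norm_smul]

lemma e2norm_cs {k : ℕ} (v w : Fin k → ℝ) :
    |∑ i, v i * w i| ≤ e2norm v * e2norm w := by
  rw [e2norm_eq, e2norm_eq]
  have := abs_real_inner_le_norm ((WithLp.equiv 2 (Fin k → ℝ)).symm v)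
    ((WithLp.equiv 2 (Fin k → ℝ)).symm w)
  simpa [PiLp.inner_apply, RCLike.inner_apply, mul_comm] using this

lemma e2norm_sq {k : ℕ} (v : Fin k → ℝ) : (∑ i, (v i) ^ 2) = (e2norm v) ^ 2 := by
  rw [e2norm, Real.sq_sqrt]
  exact Finset.sum_nonneg fun i _ => sq_nonneg _

/-- failure of exact recovery for unstable linear systems.
Let `ρ ≥ 2 + √6`, `T ≥ 2`, `n ≥ 1`, `K ⊆ {0,…,T−1}` with `T−1 ∈ K` and `min K < T−1`.
With unit attack vectors `d_k` for `k ∈ K` (and `d_k = 0` otherwise), `x₀ = 0`,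
`x_{t+1} = ρ x_t + d_t`, the matrix `ρ Iₙ` is not a global minimizer of
`g(A) = Σ_{t<T} ‖x_{t+1} − A x_t‖₂`. -/
theorem unstable_not_global_min
    (ρ : ℝ) (hρ : 2 + Real.sqrt 6 ≤ ρ)
    (T n : ℕ) (hT : 2 ≤ T) (hn : 1 ≤ n)
    (K : Finset ℕ) (hKsub : K ⊆ Finset.range T)
    (hlast : T - 1 ∈ K)
    (hmin : K.min' ⟨T - 1, hlast⟩ < T - 1)
    (d : ℕ → (Fin n → ℝ))
    (hd1 : ∀ k ∈ K, e2norm (d k) = 1) (hd0 : ∀ k ∉ K, d k = 0)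
    (x : ℕ → (Fin n → ℝ)) (hx0 : x 0 = 0)
    (hxstep : ∀ t < T, x (t + 1) = ρ • x t + d t) :
    ∃ A : Matrix (Fin n) (Fin n) ℝ,
      ∑ t ∈ Finset.range T, e2norm (x (t + 1) - A.mulVec (x t)) <
        ∑ t ∈ Finset.range T,
          e2norm (x (t + 1) - (ρ • (1 : Matrix (Fin n) (Fin n) ℝ)).mulVec (x t)) := by
  classical
  set L := T - 1 with hLdef
  have hTL : T = L + 1 := by omega
  set k₀ := K.min' ⟨T - 1, hlast⟩ with hk₀def
  have hk₀K : k₀ ∈ K := K.min'_mem _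
  have hk₀min : ∀ k ∈ K, k₀ ≤ k := fun k hk => K.min'_le k hk
  have hk₀L : k₀ < L := hmin
  have hρ4 : (4 : ℝ) ≤ ρ := by
    have h2 : (2 : ℝ) ≤ Real.sqrt 6 := by
      have : (2 : ℝ) = Real.sqrt 4 := by
        rw [show (4 : ℝ) = 2 ^ 2 by norm_num, Real.sqrt_sq (by norm_num)]
      rw [this]
      exact Real.sqrt_le_sqrt (by norm_num)
    linarith
  have hdle : ∀ t, e2norm (d t) ≤ 1 := by
    intro t
    by_cases ht : t ∈ K
    · exact le_of_eq (hd1 t ht)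
    · rw [hd0 t ht, e2norm_zero]; exact zero_le_one
  -- no attacks before k₀ ⇒ state is 0 up to k₀
  have hxz : ∀ t, t ≤ k₀ → x t = 0 := by
    intro t
    induction t with
    | zero => intro _; exact hx0
    | succ s ih =>
      intro hs
      have hsK : s ∉ K := fun h => by have := hk₀min s h; omega
      rw [hxstep s (by omega), ih (by omega), hd0 s hsK, smul_zero, zero_add]
  have hx1 : x (k₀ + 1) = d k₀ := by
    rw [hxstep k₀ (by omega), hxz k₀ le_rfl, smul_zero, zero_add]
  -- growth of the state norm
  have hgrow : ∀ t, t < T → ρ * e2norm (x t) - 1 ≤ e2norm (x (t + 1)) := by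
    intro t ht
    have key : ρ • x t = x (t + 1) + -(d t) := by
      rw [hxstep t ht]; abel
    have h1 : e2norm (ρ • x t) ≤ e2norm (x (t + 1)) + e2norm (-(d t)) := by
      rw [key]; exact e2norm_add_le _ _
    rw [e2norm_smul, e2norm_neg, abs_of_nonneg (by linarith : (0:ℝ) ≤ ρ)] at h1
    have := hdle t
    linarith
  -- the key induction: partial sums of state norms stay below the current norm
  have key : ∀ u, k₀ + 1 + u ≤ L →
      1 ≤ e2norm (x (k₀ + 1 + u)) ∧
      ∑ t ∈ Finset.range (k₀ + 1 + u), e2norm (x t) < e2norm (x (k₀ + 1 + u)) := by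
    intro u
    induction u with
    | zero =>
      intro _
      have h1 : e2norm (x (k₀ + 1 + 0)) = 1 := by
        simpa using (hx1 ▸ hd1 k₀ hk₀K : e2norm (x (k₀ + 1)) = 1)
      constructor
      · rw [h1]
      · have hz : ∑ t ∈ Finset.range (k₀ + 1 + 0), e2norm (x t) = 0 := by
          apply Finset.sum_eq_zero
          intro t ht
          rw [Finset.mem_range] at ht
          rw [hxz t (by omega), e2norm_zero]
        rw [hz, h1]; norm_num
    | succ u ih =>
      intro hle
      obtain ⟨ih1, ih2⟩ := ih (by omega)
      have hg := hgrow (k₀ + 1 + u) (by omega)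
      have heq : k₀ + 1 + (u + 1) = (k₀ + 1 + u) + 1 := by ring
      constructor
      · rw [heq]; nlinarith
      · rw [heq, Finset.sum_range_succ]
        nlinarith [e2norm_nonneg (x (k₀ + 1 + u))]
  obtain ⟨hN1, hS⟩ := key (L - (k₀ + 1)) (by omega)
  rw [show k₀ + 1 + (L - (k₀ + 1)) = L by omega] at hN1 hS
  set N := e2norm (x L) with hNdef
  have hNpos : (0 : ℝ) < N := by linarith
  -- the alternative matrix
  set cc : (Fin n → ℝ) → ℝ := fun v => (∑ j, x L j * v j) / N ^ 2 with hccdef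
  set A : Matrix (Fin n) (Fin n) ℝ :=
    ρ • (1 : Matrix (Fin n) (Fin n) ℝ) + Matrix.of (fun i j => d L i * x L j / N ^ 2) with hA
  have hAmul : ∀ v : Fin n → ℝ, A.mulVec v = ρ • v + (cc v) • d L := by
    intro v
    funext i
    have h0 : A.mulVec v i
        = ∑ j, ((ρ • (1 : Matrix (Fin n) (Fin n) ℝ)) i j + d L i * x L j / N ^ 2) * v j := rfl
    rw [h0, Finset.sum_congr rfl fun j _ => add_mul _ _ _, Finset.sum_add_distrib]
    have h1 : ∑ j, (ρ • (1 : Matrix (Fin n) (Fin n) ℝ)) i j * v j = ρ * v i := by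
      simp [Matrix.smul_apply, Matrix.one_apply, mul_ite, mul_assoc]
    have h2 : ∑ j, (d L i * x L j / N ^ 2) * v j = cc v * d L i := by
      rw [hccdef]
      rw [Finset.sum_congr rfl fun j _ => (by ring :
        (d L i * x L j / N ^ 2) * v j = (x L j * v j) * (d L i / N ^ 2))]
      rw [← Finset.sum_mul]
      ring
    rw [h1, h2]
    simp [Pi.add_apply, Pi.smul_apply, smul_eq_mul, mul_comm]
  -- residuals under A
  have hres : ∀ t, t < T → x (t + 1) - A.mulVec (x t) = d t - (cc (x t)) • d L := by
    intro t ht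
    rw [hxstep t ht, hAmul]
    abel
  have hccL : cc (x L) = 1 := by
    rw [hccdef]
    simp only []
    rw [Finset.sum_congr rfl fun j _ => (by ring : x L j * x L j = (x L j) ^ 2), e2norm_sq]
    rw [← hNdef]
    field_simp
  have hlastres : e2norm (x (L + 1) - A.mulVec (x L)) = 0 := by
    rw [hres L (by omega), hccL, one_smul, sub_self, e2norm_zero]
  -- termwise bound for t < L
  have hterm : ∀ t, t < L →
      e2norm (x (t + 1) - A.mulVec (x t)) ≤ e2norm (d t) + e2norm (x t) / N := by
    intro t ht
    rw [hres t (by omega)]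
    have h1 : e2norm (d t - cc (x t) • d L) ≤ e2norm (d t) + e2norm (cc (x t) • d L) :=
      e2norm_sub_le _ _
    have h2 : e2norm (cc (x t) • d L) = |cc (x t)| * e2norm (d L) := e2norm_smul _ _
    have h3 : |cc (x t)| ≤ e2norm (x t) / N := by
      rw [hccdef]
      simp only []
      rw [abs_div, abs_of_nonneg (by positivity : (0:ℝ) ≤ N ^ 2)]
      rw [div_le_div_iff₀ (by positivity) hNpos]
      have := e2norm_cs (x L) (x t)
      calc |∑ j, x L j * x t j| * N ≤ (N * e2norm (x t)) * N := by
            apply mul_le_mul_of_nonneg_right _ (le_of_lt hNpos)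
            exact this
        _ = e2norm (x t) * N ^ 2 := by ring
    have h4 : e2norm (d L) = 1 := hd1 L (by rwa [hLdef])
    calc e2norm (d t - cc (x t) • d L) ≤ e2norm (d t) + |cc (x t)| * e2norm (d L) := by
          rw [← h2]; exact h1
      _ = e2norm (d t) + |cc (x t)| := by rw [h4, mul_one]
      _ ≤ e2norm (d t) + e2norm (x t) / N := by linarith
  -- the loss of ρI
  have hold : ∀ t, t < T →
      e2norm (x (t + 1) - (ρ • (1 : Matrix (Fin n) (Fin n) ℝ)).mulVec (x t)) = e2norm (d t) := by
    intro t ht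
    have hm : (ρ • (1 : Matrix (Fin n) (Fin n) ℝ)).mulVec (x t) = ρ • x t := by
      rw [Matrix.smul_mulVec, Matrix.one_mulVec]
    rw [hm, hxstep t ht]
    congr 1
    abel
  refine ⟨A, ?_⟩
  have hrw_old : ∑ t ∈ Finset.range T,
      e2norm (x (t + 1) - (ρ • (1 : Matrix (Fin n) (Fin n) ℝ)).mulVec (x t))
      = (∑ t ∈ Finset.range L, e2norm (d t)) + 1 := by
    rw [hTL, Finset.sum_range_succ]
    rw [Finset.sum_congr rfl fun t ht => hold t (by rw [Finset.mem_range] at ht; omega)]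
    rw [hold L (by omega), hd1 L (by rwa [hLdef])]
  have hrw_new : ∑ t ∈ Finset.range T, e2norm (x (t + 1) - A.mulVec (x t))
      = ∑ t ∈ Finset.range L, e2norm (x (t + 1) - A.mulVec (x t)) := by
    rw [hTL, Finset.sum_range_succ, hlastres, add_zero]
  rw [hrw_old, hrw_new]
  calc ∑ t ∈ Finset.range L, e2norm (x (t + 1) - A.mulVec (x t))
      ≤ ∑ t ∈ Finset.range L, (e2norm (d t) + e2norm (x t) / N) := by
        apply Finset.sum_le_sum
        intro t ht
        exact hterm t (by rwa [Finset.mem_range] at ht)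
    _ = (∑ t ∈ Finset.range L, e2norm (d t)) + (∑ t ∈ Finset.range L, e2norm (x t)) / N := by
        rw [Finset.sum_add_distrib, Finset.sum_div]
    _ < (∑ t ∈ Finset.range L, e2norm (d t)) + 1 := by
        have : (∑ t ∈ Finset.range L, e2norm (x t)) / N < 1 :=
          (div_lt_one hNpos).mpr hS
        linarith
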